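/- Let ζ₀ be a zero of ω_m with ζ₀ ∉ {z_{ν+1},…,z_λ}, D(ζ₀) ≠ 0, and |ζ₀| = |z_{ν+1}|. Then along n ∈ Λ_m, the error r(ζ₀) − π_{n,λ−1}(ζ₀) = ζ₀^{n+λ}/(D(ζ₀)V_{n+λ}(ζ₀)) does not converge to 0. -/

import Mathlib

open Polynomial Finset Filter Topology

theorem stmt9 (lam nu sig mm : ℕ) (hnu1 : 1 < nu) (hnul : nu + 1 < lam)
    (hsig : nu ≤ sig) (hmm : mm < sig)
    (z Cc : Fin lam → ℂ) (hz : Function.Injective z)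
    (hC : ∀ j, Cc j ≠ 0)
    (hmod : ∀ j : Fin lam, (j : ℕ) < nu →
      ‖z j‖ = ‖z ⟨0, by omega⟩‖)
    (hroot : ∀ j : Fin lam, (j : ℕ) < nu → z j ^ sig = z ⟨0, by omega⟩ ^ sig)
    (hdrop : ∀ j : Fin lam, nu ≤ (j : ℕ) →
      ‖z j‖ < ‖z ⟨0, by omega⟩‖)
    (hdrop1 : ∀ j : Fin lam, nu + 1 ≤ (j : ℕ) →
      ‖z j‖ < ‖z ⟨nu, by omega⟩‖)
    (hdrop2 : ∀ j : Fin lam, nu + 1 ≤ (j : ℕ) →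
      ‖z j‖ ≤ ‖z ⟨nu + 1, hnul⟩‖)
    (ζ₀ : ℂ) (hζ : ∀ j : Fin lam, nu ≤ (j : ℕ) → ζ₀ ≠ z j)
    (habs : ‖ζ₀‖ = ‖z ⟨nu, by omega⟩‖) :
    let D : Polynomial ℂ := ∏ i, (Polynomial.X - Polynomial.C (z i))
    let Dj : Fin lam → Polynomial ℂ :=
      fun j => ∏ i ∈ Finset.univ.erase j, (Polynomial.X - Polynomial.C (z i))
    let V : ℕ → Polynomial ℂ := fun k => ∑ j, Polynomial.C (Cc j * z j ^ k) * Dj j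
    let dom : Finset (Fin lam) := Finset.univ.filter (fun j => (j : ℕ) < nu)
    let ω : Polynomial ℂ := ∑ k ∈ dom, Polynomial.C (Cc k * z k ^ mm) *
      ∏ i ∈ dom.erase k, (Polynomial.X - Polynomial.C (z i))
    let Λ : Filter ℕ := atTop ⊓ Filter.principal {n | (n + lam) % sig = mm % sig}
    ω.eval ζ₀ = 0 → D.eval ζ₀ ≠ 0 →
    ¬ Tendsto (fun n : ℕ => ζ₀ ^ (n + lam) / (D.eval ζ₀ * (V (n + lam)).eval ζ₀)) Λ (𝓝 0) := by
  intro D Dj V dom ω Λ hω hD htend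
  set jν : Fin lam := ⟨nu, by omega⟩ with hjνdef
  have hDfac : ∀ j : Fin lam, D = (X - C (z j)) * Dj j := fun j =>
    (Finset.mul_prod_erase univ _ (mem_univ j)).symm
  have hDjne : ∀ j, (Dj j).eval ζ₀ ≠ 0 := by
    intro j h
    apply hD; rw [hDfac j]; simp [h]
  -- R and r
  set R : ℝ := ‖ζ₀‖ with hRdef
  set r : ℝ := ‖z ⟨nu + 1, hnul⟩‖ with hrdef
  have hrR : r < R :=
    lt_of_lt_of_eq (hdrop1 ⟨nu + 1, hnul⟩ (le_refl _)) habs.symm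
  have hR0 : (0:ℝ) < R := (norm_nonneg _).trans_lt hrR
  -- complement of dom
  set domc : Finset (Fin lam) := univ.filter (fun j => ¬ (j : ℕ) < nu) with hdomc
  have hjνmem : jν ∈ domc := by simp [hdomc, hjνdef]
  set S : ℕ → ℂ := fun k => ∑ j ∈ domc, Cc j * z j ^ k * (Dj j).eval ζ₀ with hSdef
  -- Step A : along the progression, V evaluates to S
  have keyV : ∀ k, mm ≤ k → k % sig = mm % sig → (V k).eval ζ₀ = S k := by
    intro k hk1 hk2
    obtain ⟨q, hq⟩ : ∃ q, k = mm + sig * q := by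
      obtain ⟨q, hq⟩ := (Nat.modEq_iff_dvd' hk1).mp hk2.symm
      exact ⟨q, by omega⟩
    have hVeval : (V k).eval ζ₀ = ∑ j, Cc j * z j ^ k * (Dj j).eval ζ₀ := by
      simp [V, eval_finset_sum]
    rw [hVeval,
      ← Finset.sum_filter_add_sum_filter_not (univ : Finset (Fin lam))
        (fun j : Fin lam => (j : ℕ) < nu)
        (fun j : Fin lam => Cc j * z j ^ k * (Dj j).eval ζ₀)]
    have hωe : ∑ j ∈ dom, Cc j * z j ^ mm * (∏ i ∈ dom.erase j, (ζ₀ - z i)) = 0 := by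
      simpa [ω, eval_finset_sum, eval_prod] using hω
    have hzero : ∑ j ∈ filter (fun j : Fin lam => (j : ℕ) < nu) univ,
        Cc j * z j ^ k * (Dj j).eval ζ₀ = 0 := by
      have hterm : ∀ j ∈ dom, Cc j * z j ^ k * (Dj j).eval ζ₀
          = (z ⟨0, by omega⟩ ^ sig) ^ q * (∏ i ∈ domc, (ζ₀ - z i)) *
            (Cc j * z j ^ mm * ∏ i ∈ dom.erase j, (ζ₀ - z i)) := by
        intro j hj
        have hjlt : (j : ℕ) < nu := by simpa [dom] using hj
        have hzk : z j ^ k = z j ^ mm * (z ⟨0, by omega⟩ ^ sig) ^ q := by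
          rw [hq, pow_add, pow_mul, hroot j hjlt]
        have hDje : (Dj j).eval ζ₀ = ∏ i ∈ univ.erase j, (ζ₀ - z i) := by
          simp [Dj, eval_prod]
        have hsplit : ∏ i ∈ univ.erase j, (ζ₀ - z i)
            = (∏ i ∈ dom.erase j, (ζ₀ - z i)) * ∏ i ∈ domc, (ζ₀ - z i) := by
          rw [← Finset.prod_filter_mul_prod_filter_not (univ.erase j)
            (fun i : Fin lam => (i : ℕ) < nu) (fun i : Fin lam => ζ₀ - z i)]
          congr 1
          · apply Finset.prod_congr _ (fun _ _ => rfl)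
            ext i
            simp only [Finset.mem_filter, Finset.mem_erase, Finset.mem_univ, true_and,
              dom]
            tauto
          · apply Finset.prod_congr _ (fun _ _ => rfl)
            ext i
            simp only [Finset.mem_filter, Finset.mem_erase, Finset.mem_univ, true_and,
              hdomc]
            constructor
            · rintro ⟨-, h2⟩; exact h2
            · intro h2
              refine ⟨⟨?_, trivial⟩, h2⟩
              intro hij
              rw [hij] at h2
              exact h2 hjlt
        rw [hzk, hDje, hsplit]; ring
      rw [show (filter (fun j : Fin lam => (j : ℕ) < nu) univ) = dom from rfl,
        Finset.sum_congr rfl hterm, ← Finset.mul_sum, hωe, mul_zero]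
    rw [hzero, zero_add]
  -- coefficients
  set g : Fin lam → ℝ := fun j => ‖Cc j * (Dj j).eval ζ₀‖ with hgdef
  have hg0 : ∀ j, 0 ≤ g j := fun j => norm_nonneg _
  set M : ℝ := ∑ j ∈ domc, g j with hMdef
  set c : ℝ := g jν with hcdef
  have hc : 0 < c := by
    rw [hcdef, hgdef]
    simp only [norm_mul]
    exact mul_pos (norm_pos_iff.mpr (hC _)) (norm_pos_iff.mpr (hDjne _))
  have hcM : c ≤ M := Finset.single_le_sum (fun j _ => hg0 j) hjνmem
  have hM0 : 0 < M := lt_of_lt_of_le hc hcM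
  -- abs of z j for j in domc
  have hzleR : ∀ j ∈ domc, ‖z j‖ ≤ R := by
    intro j hj
    have hjge : nu ≤ (j : ℕ) := by
      simp only [hdomc, Finset.mem_filter, Finset.mem_univ, true_and, not_lt] at hj
      exact hj
    rcases eq_or_lt_of_le hjge with h | h
    · have hjj : j = jν := by ext; simp [hjνdef, h.symm]
      rw [hjj]
      exact le_of_eq habs.symm
    · exact le_of_lt (lt_of_lt_of_eq (hdrop1 j h) habs.symm)
  have hzler : ∀ j ∈ domc.erase jν, ‖z j‖ ≤ r := by
    intro j hj
    have hjne : j ≠ jν := (Finset.mem_erase.mp hj).1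
    have hjge : nu ≤ (j : ℕ) := by
      have := (Finset.mem_erase.mp hj).2
      simp only [hdomc, Finset.mem_filter, Finset.mem_univ, true_and, not_lt] at this
      exact this
    have hjgt : nu + 1 ≤ (j : ℕ) := by
      rcases eq_or_lt_of_le hjge with h | h
      · exact absurd (by ext; simp [hjνdef, h.symm]) hjne
      · exact h
    exact hdrop2 j hjgt
  -- upper bound
  have hupper : ∀ k, ‖S k‖ ≤ M * R ^ k := by
    intro k
    calc ‖S k‖ ≤ ∑ j ∈ domc, ‖Cc j * z j ^ k * (Dj j).eval ζ₀‖ :=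
          norm_sum_le _ _
      _ ≤ ∑ j ∈ domc, g j * R ^ k := by
          apply Finset.sum_le_sum
          intro j hj
          have : ‖Cc j * z j ^ k * (Dj j).eval ζ₀‖
              = g j * ‖z j‖ ^ k := by
            simp only [hgdef, norm_mul, norm_pow]; ring
          rw [this]
          exact mul_le_mul_of_nonneg_left
            (pow_le_pow_left₀ (norm_nonneg _) (hzleR j hj) k) (hg0 j)
      _ = M * R ^ k := by rw [← Finset.sum_mul]
  set M' : ℝ := ∑ j ∈ domc.erase jν, g j with hM'def
  have htail : ∀ k, ‖S k - Cc jν * z jν ^ k * (Dj jν).eval ζ₀‖ ≤ M' * r ^ k := by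
    intro k
    have hsplit : S k - Cc jν * z jν ^ k * (Dj jν).eval ζ₀
        = ∑ j ∈ domc.erase jν, Cc j * z j ^ k * (Dj j).eval ζ₀ := by
      have hSk : S k = ∑ j ∈ domc, Cc j * z j ^ k * (Dj j).eval ζ₀ := rfl
      rw [hSk, ← Finset.add_sum_erase _ _ hjνmem]
      ring
    rw [hsplit]
    calc ‖∑ j ∈ domc.erase jν, Cc j * z j ^ k * (Dj j).eval ζ₀‖
        ≤ ∑ j ∈ domc.erase jν, ‖Cc j * z j ^ k * (Dj j).eval ζ₀‖ :=
          norm_sum_le _ _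
      _ ≤ ∑ j ∈ domc.erase jν, g j * r ^ k := by
          apply Finset.sum_le_sum
          intro j hj
          have : ‖Cc j * z j ^ k * (Dj j).eval ζ₀‖
              = g j * ‖z j‖ ^ k := by
            simp only [hgdef, norm_mul, norm_pow]; ring
          rw [this]
          exact mul_le_mul_of_nonneg_left
            (pow_le_pow_left₀ (norm_nonneg _) (hzler j hj) k) (hg0 j)
      _ = M' * r ^ k := by rw [← Finset.sum_mul]
  have hlead : ∀ k, ‖Cc jν * z jν ^ k * (Dj jν).eval ζ₀‖ = c * R ^ k := by
    intro k
    have hzR : ‖z jν‖ = R := habs.symm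
    simp only [hcdef, hgdef, norm_mul, norm_pow, hzR]; ring
  -- eventual lower bound on |S k|
  have hlim : Tendsto (fun k : ℕ => M' * (r / R) ^ k) atTop (𝓝 0) := by
    have h1 : Tendsto (fun k : ℕ => (r / R) ^ k) atTop (𝓝 0) :=
      tendsto_pow_atTop_nhds_zero_of_lt_one
        (div_nonneg (norm_nonneg _) hR0.le) ((div_lt_one hR0).mpr hrR)
    simpa using h1.const_mul M'
  have hevS : ∀ᶠ k in atTop, c / 2 * R ^ k ≤ ‖S k‖ := by
    filter_upwards [hlim.eventually (gt_mem_nhds (half_pos hc))] with k hk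
    have hrk : M' * r ^ k ≤ c / 2 * R ^ k := by
      have h1 : M' * r ^ k = M' * (r / R) ^ k * R ^ k := by
        rw [div_pow]
        field_simp
      rw [h1]
      exact mul_le_mul_of_nonneg_right hk.le (pow_nonneg hR0.le k)
    have h2 := htail k
    have h3 := hlead k
    have h4 : c * R ^ k - ‖S k‖
        ≤ ‖S k - Cc jν * z jν ^ k * (Dj jν).eval ζ₀‖ := by
      have := norm_sub_norm_le (Cc jν * z jν ^ k * (Dj jν).eval ζ₀) (S k)
      calc c * R ^ k - ‖S k‖
          = ‖Cc jν * z jν ^ k * (Dj jν).eval ζ₀‖ - ‖S k‖ := by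
            rw [h3]
        _ ≤ ‖Cc jν * z jν ^ k * (Dj jν).eval ζ₀ - S k‖ := this
        _ = ‖S k - Cc jν * z jν ^ k * (Dj jν).eval ζ₀‖ := by
            rw [← norm_neg]; ring_nf
    linarith
  -- the filter is not trivial
  have hNB : Λ.NeBot := by
    apply Filter.frequently_iff_neBot.mp
    rw [Filter.frequently_atTop]
    intro N
    have h2 : 2 * (N + lam) ≤ sig * (N + lam) := Nat.mul_le_mul_right _ (by omega)
    refine ⟨sig * (N + lam) + mm - lam, by omega, ?_⟩
    show (sig * (N + lam) + mm - lam + lam) % sig = mm % sig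
    have he : sig * (N + lam) + mm - lam + lam = sig * (N + lam) + mm := by omega
    rw [he, Nat.mul_add_mod]
  -- main eventual lower bound on the ratio
  have hDabs : 0 < ‖D.eval ζ₀‖ := norm_pos_iff.mpr hD
  obtain ⟨ε, hεdef⟩ : ∃ ε : ℝ, ε = 1 / (‖D.eval ζ₀‖ * M) := ⟨_, rfl⟩
  have hε0 : 0 < ε := by
    rw [hεdef]
    exact one_div_pos.mpr (mul_pos hDabs hM0)
  have hmain : ∀ᶠ n in Λ,
      ε ≤ ‖ζ₀ ^ (n + lam) / (D.eval ζ₀ * (V (n + lam)).eval ζ₀)‖ := by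
    have hev1 : ∀ᶠ n in atTop, mm ≤ n + lam := by
      filter_upwards [eventually_ge_atTop mm] with n hn; omega
    have hev2 : ∀ᶠ n in atTop, c / 2 * R ^ (n + lam) ≤ ‖S (n + lam)‖ :=
      (tendsto_add_atTop_nat lam).eventually hevS
    have hev3 : ∀ᶠ n in Λ, (n + lam) % sig = mm % sig :=
      eventually_inf_principal.mpr (Eventually.of_forall (fun n hn => hn))
    filter_upwards [(hev1.and hev2).filter_mono inf_le_left, hev3] with n hn hn3
    obtain ⟨hn1, hn2⟩ := hn
    set k := n + lam with hk
    have hVS : (V k).eval ζ₀ = S k := keyV k hn1 hn3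
    have hSpos : 0 < ‖S k‖ :=
      lt_of_lt_of_le (mul_pos (half_pos hc) (pow_pos hR0 _)) hn2
    have habsratio : ‖ζ₀ ^ k / (D.eval ζ₀ * (V k).eval ζ₀)‖
        = R ^ k / (‖D.eval ζ₀‖ * ‖S k‖) := by
      rw [norm_div, norm_mul, norm_pow, hVS, hRdef]
    rw [habsratio, hεdef]
    have hd1 : 0 < ‖D.eval ζ₀‖ * M := mul_pos hDabs hM0
    have hd2 : 0 < ‖D.eval ζ₀‖ * ‖S k‖ := mul_pos hDabs hSpos
    rw [div_le_div_iff₀ hd1 hd2]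
    calc 1 * (‖D.eval ζ₀‖ * ‖S k‖)
        ≤ ‖D.eval ζ₀‖ * (M * R ^ k) := by
          rw [one_mul]; exact mul_le_mul_of_nonneg_left (hupper k) hDabs.le
      _ = R ^ k * (‖D.eval ζ₀‖ * M) := by ring
  -- contradiction
  have hsmall : ∀ᶠ n in Λ,
      ‖ζ₀ ^ (n + lam) / (D.eval ζ₀ * (V (n + lam)).eval ζ₀)‖ < ε := by
    have := Metric.tendsto_nhds.mp htend ε hε0
    filter_upwards [this] with n hn
    simpa [Complex.dist_eq] using hn
  obtain ⟨n, h1, h2⟩ := (hmain.and hsmall).exists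
  exact absurd h1 (not_le.mpr h2)
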